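/- Let m : [0, s̄] → [0, ∞) be a non-increasing bounded function, and for κ > 0 let J_κ = {s₀ ∈ [0, s̄] : |m(s) − m(s₀)| ≤ κ·|s − s₀| for all s ∈ [0, s̄]}. Then the Lebesgue measure of J_κ satisfies meas(J_κ) ≥ s̄ − 2·m(0)/κ; in particular meas(J_κ) → s̄ as κ → +∞. -/

import Mathlib

open MeasureTheory Filter Set
open scoped ENNReal Topology

lemma lip_image_vol {K : NNReal} {f : ℝ → ℝ} (hf : LipschitzWith K f) (s : Set ℝ) :
    volume (f '' s) ≤ (K : ℝ≥0∞) * volume s := by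
  simpa [hausdorffMeasure_real, ENNReal.rpow_one] using
    hf.hausdorffMeasure_image_le zero_le_one s

lemma sunrise_oneside (sbar : ℝ) (hsbar : 0 ≤ sbar) (m : ℝ → ℝ)
    (hm_nonneg : ∀ s ∈ Icc (0 : ℝ) sbar, 0 ≤ m s)
    (hm_mono : ∀ s ∈ Icc (0 : ℝ) sbar, ∀ t ∈ Icc (0 : ℝ) sbar, s ≤ t → m t ≤ m s)
    {κ : ℝ} (hκ : 0 < κ) :
    volume {x ∈ Icc (0 : ℝ) sbar | ∃ s ∈ Icc (0 : ℝ) sbar, s < x ∧ κ * (x - s) < m s - m x} ≤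
      ENNReal.ofReal (m 0 / κ) := by
  set c : ℝ → ℝ := fun x => max 0 (min x sbar) with hc
  have hc_mem : ∀ x, c x ∈ Icc (0:ℝ) sbar := fun x =>
    ⟨le_max_left _ _, max_le hsbar (min_le_right _ _)⟩
  have hc_mono : Monotone c := fun x y hxy => max_le_max le_rfl (min_le_min hxy le_rfl)
  set mt : ℝ → ℝ := fun x => m (c x) with hmt
  have hmt_anti : Antitone mt := fun x y hxy => hm_mono _ (hc_mem x) _ (hc_mem y) (hc_mono hxy)
  have hmt_nonneg : ∀ x, 0 ≤ mt x := fun x => hm_nonneg _ (hc_mem x)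
  have hmt_le : ∀ x, mt x ≤ m 0 := fun x => by
    have h0 : (0:ℝ) ∈ Icc (0:ℝ) sbar := ⟨le_rfl, hsbar⟩
    have := hm_mono 0 h0 _ (hc_mem x) (hc_mem x).1
    simpa using this
  have hc_eq : ∀ x ∈ Icc (0:ℝ) sbar, c x = x := fun x hx => by
    simp [hc, min_eq_left hx.2, max_eq_right hx.1]
  set g : ℝ → ℝ := fun x => mt x + κ * x with hg
  have hbdd : ∀ x, BddAbove (g '' Iic x) := fun x => by
    refine ⟨m 0 + κ * x, ?_⟩
    rintro _ ⟨s, hs, rfl⟩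
    have : κ * s ≤ κ * x := by nlinarith [mem_Iic.1 hs]
    exact add_le_add (hmt_le s) this
  have hne : ∀ x : ℝ, (g '' Iic x).Nonempty := fun x => ⟨g x, ⟨x, mem_Iic.2 le_rfl, rfl⟩⟩
  set h : ℝ → ℝ := fun x => sSup (g '' Iic x) with hh
  have hg_le_h : ∀ x, g x ≤ h x := fun x => le_csSup (hbdd x) ⟨x, mem_Iic.2 le_rfl, rfl⟩
  have h_mono : Monotone h := fun x y hxy =>
    csSup_le_csSup (hbdd y) (hne x) (image_mono (Iic_subset_Iic.2 hxy))
  have h_lip : ∀ x y, x ≤ y → h y ≤ h x + κ * (y - x) := by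
    intro x y hxy
    refine csSup_le (hne y) ?_
    rintro _ ⟨s, hs, rfl⟩
    rcases le_or_gt s x with hsx | hsx
    · have h1 : g s ≤ h x := le_csSup (hbdd x) ⟨s, mem_Iic.2 hsx, rfl⟩
      nlinarith
    · have h1 : mt s ≤ mt x := hmt_anti hsx.le
      have h2 : g x ≤ h x := hg_le_h x
      have h3 : κ * s ≤ κ * y := by nlinarith [mem_Iic.1 hs]
      have : g s ≤ g x + κ * (y - x) := by
        simp only [hg]
        nlinarith
      linarith
  have hLip : LipschitzWith κ.toNNReal h := by
    apply LipschitzWith.of_dist_le_mul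
    intro x y
    have hκ' : (κ.toNNReal : ℝ) = κ := Real.coe_toNNReal _ hκ.le
    rw [Real.dist_eq, Real.dist_eq, hκ']
    rcases le_total x y with hxy | hxy
    · have h1 := h_lip x y hxy
      have h2 := h_mono hxy
      rw [abs_of_nonpos (by linarith : h x - h y ≤ 0), abs_of_nonpos (by linarith : x - y ≤ 0)]
      nlinarith
    · have h1 := h_lip y x hxy
      have h2 := h_mono hxy
      rw [abs_of_nonneg (by linarith : 0 ≤ h x - h y), abs_of_nonneg (by linarith : 0 ≤ x - y)]
      nlinarith
  have h0mem : (0:ℝ) ∈ Icc (0:ℝ) sbar := ⟨le_rfl, hsbar⟩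
  have hsbmem : sbar ∈ Icc (0:ℝ) sbar := ⟨hsbar, le_rfl⟩
  have hg0 : g 0 = m 0 := by simp [hg, hmt, hc_eq 0 h0mem]
  have h0 : h 0 = m 0 := by
    refine le_antisymm (csSup_le (hne 0) ?_) (hg0 ▸ hg_le_h 0)
    rintro _ ⟨s, hs, rfl⟩
    have hs0 : s ≤ 0 := mem_Iic.1 hs
    have hcs : c s = 0 := by
      have : min s sbar = s := min_eq_left (le_trans hs0 hsbar)
      simp [hc, this, max_eq_left hs0]
    have : g s = m 0 + κ * s := by simp [hg, hmt, hcs]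
    nlinarith
  have hsb : κ * sbar ≤ h sbar := by
    have h1 : g sbar = m sbar + κ * sbar := by simp [hg, hmt, hc_eq sbar hsbmem]
    have := hg_le_h sbar
    have := hm_nonneg sbar hsbmem
    linarith
  set E : Set ℝ := {x | g x < h x} with hE
  have hEmeas : MeasurableSet E :=
    measurableSet_lt (hmt_anti.measurable.add (measurable_id.const_mul κ))
      hLip.continuous.measurable
  have hBsub : {x ∈ Icc (0 : ℝ) sbar | ∃ s ∈ Icc (0 : ℝ) sbar, s < x ∧ κ * (x - s) < m s - m x}
      ⊆ E ∩ Icc 0 sbar := by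
    rintro x ⟨hx, s, hs, hsx, hlt⟩
    refine ⟨?_, hx⟩
    have hgs : g s = m s + κ * s := by simp [hg, hmt, hc_eq s hs]
    have hgx : g x = m x + κ * x := by simp [hg, hmt, hc_eq x hx]
    have hlt2 : g x < g s := by nlinarith
    exact lt_of_lt_of_le hlt2 (le_csSup (hbdd x) ⟨s, mem_Iic.2 hsx.le, rfl⟩)
  have hconst : ∀ x ∈ E, ∀ y ∈ Icc x (x + (h x - g x)/(2*κ)), h y = h x := by
    intro x hx y hy
    refine le_antisymm ?_ (h_mono hy.1)
    refine csSup_le (hne y) ?_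
    rintro _ ⟨s, hs, rfl⟩
    rcases le_or_gt s x with hsx | hsx
    · exact le_csSup (hbdd x) ⟨s, mem_Iic.2 hsx, rfl⟩
    · have h1 : mt s ≤ mt x := hmt_anti hsx.le
      have h2 : κ * s ≤ κ * y := by nlinarith [mem_Iic.1 hs]
      have hgap : 0 < h x - g x := sub_pos.2 hx
      have hy2 := hy.2
      have hy1 := hy.1
      have h5 : y - x ≤ (h x - g x)/(2*κ) := by linarith
      have h3 : κ * (y - x) ≤ κ * ((h x - g x)/(2*κ)) :=
        mul_le_mul_of_nonneg_left h5 hκ.le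
      have h4 : κ * ((h x - g x)/(2*κ)) = (h x - g x)/2 := by
        field_simp
      simp only [hg] at *
      nlinarith
  have hcnt : (h '' E).Countable := by
    have hdisj : (h '' E).PairwiseDisjoint (fun v => h ⁻¹' {v}) := by
      intro a _ b _ hab
      refine disjoint_left.2 fun y hy1 hy2 => hab ?_
      simp only [mem_preimage, mem_singleton_iff] at hy1 hy2
      rw [← hy1, ← hy2]
    refine hdisj.countable_of_nonempty_interior ?_
    rintro v ⟨x, hx, rfl⟩
    have hgap : 0 < (h x - g x)/(2*κ) := by
      have : 0 < h x - g x := sub_pos.2 hx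
      positivity
    have hsub : Ioo x (x + (h x - g x)/(2*κ)) ⊆ h ⁻¹' {h x} := by
      intro y hy
      exact hconst x hx y ⟨hy.1.le, hy.2.le⟩
    have hsub2 : Ioo x (x + (h x - g x)/(2*κ)) ⊆ interior (h ⁻¹' {h x}) :=
      interior_maximal hsub isOpen_Ioo
    have hd : 0 < h x - g x := sub_pos.2 hx
    have e1 : 0 < (h x - g x)/(4*κ) := by positivity
    have e2 : (h x - g x)/(4*κ) < (h x - g x)/(2*κ) :=
      div_lt_div_of_pos_left hd (by positivity) (by linarith)
    exact ⟨x + (h x - g x)/(4*κ), hsub2 ⟨by linarith, by linarith⟩⟩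
  have himg : Icc (h 0) (h sbar) ⊆ h '' Icc 0 sbar :=
    intermediate_value_Icc hsbar hLip.continuous.continuousOn
  have hofk : ((κ.toNNReal : NNReal) : ℝ≥0∞) = ENNReal.ofReal κ := rfl
  have key : ENNReal.ofReal (h sbar - h 0) ≤ ENNReal.ofReal κ * volume (Icc 0 sbar \ E) := by
    calc ENNReal.ofReal (h sbar - h 0) = volume (Icc (h 0) (h sbar)) := (Real.volume_Icc).symm
      _ ≤ volume (h '' Icc 0 sbar) := measure_mono himg
      _ ≤ volume (h '' (E ∩ Icc 0 sbar) ∪ h '' (Icc 0 sbar \ E)) := by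
          refine measure_mono (image_subset_iff.2 fun y hy => ?_)
          by_cases hyE : y ∈ E
          · exact Or.inl (mem_image_of_mem h ⟨hyE, hy⟩)
          · exact Or.inr (mem_image_of_mem h ⟨hy, hyE⟩)
      _ ≤ volume (h '' (E ∩ Icc 0 sbar)) + volume (h '' (Icc 0 sbar \ E)) :=
          measure_union_le _ _
      _ ≤ 0 + ENNReal.ofReal κ * volume (Icc 0 sbar \ E) := by
          gcongr
          · exact le_of_eq (measure_mono_null (image_mono inter_subset_left)
              (hcnt.measure_zero _)) |>.trans (le_refl 0) |>.trans (le_refl 0)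
          · exact hofk ▸ lip_image_vol hLip _
      _ = ENNReal.ofReal κ * volume (Icc 0 sbar \ E) := by rw [zero_add]
  have hdiv : ENNReal.ofReal (sbar - m 0 / κ) ≤ volume (Icc (0:ℝ) sbar \ E) := by
    have h1 : ENNReal.ofReal (κ * sbar - m 0) ≤ ENNReal.ofReal κ * volume (Icc (0:ℝ) sbar \ E) :=
      (ENNReal.ofReal_le_ofReal (by linarith)).trans key
    have h2 : ENNReal.ofReal (κ * sbar - m 0) / ENNReal.ofReal κ ≤ volume (Icc (0:ℝ) sbar \ E) :=
      ENNReal.div_le_of_le_mul' h1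
    rwa [← ENNReal.ofReal_div_of_pos hκ, show (κ * sbar - m 0)/κ = sbar - m 0 / κ by field_simp] at h2
  have hfin : volume (Icc (0:ℝ) sbar \ E) ≠ ∞ :=
    ((measure_mono diff_subset).trans_lt (by simp [Real.volume_Icc] : volume (Icc (0:ℝ) sbar) < ∞)).ne
  have hsplit : volume (Icc (0:ℝ) sbar ∩ E) + volume (Icc (0:ℝ) sbar \ E) = volume (Icc (0:ℝ) sbar) :=
    measure_inter_add_diff _ hEmeas
  have hEIcc : volume (E ∩ Icc (0:ℝ) sbar) ≤ ENNReal.ofReal (m 0 / κ) := by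
    have heq : volume (E ∩ Icc (0:ℝ) sbar) = volume (Icc (0:ℝ) sbar) - volume (Icc (0:ℝ) sbar \ E) := by
      rw [inter_comm]
      exact ENNReal.eq_sub_of_add_eq hfin hsplit
    rw [heq, Real.volume_Icc]
    refine tsub_le_iff_right.2 ?_
    calc ENNReal.ofReal (sbar - 0) = ENNReal.ofReal (m 0 / κ + (sbar - m 0 / κ)) := by ring_nf
      _ ≤ ENNReal.ofReal (m 0 / κ) + ENNReal.ofReal (sbar - m 0 / κ) := ENNReal.ofReal_add_le
      _ ≤ ENNReal.ofReal (m 0 / κ) + volume (Icc (0:ℝ) sbar \ E) := by gcongr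
  exact (measure_mono hBsub).trans hEIcc

/-- Riesz sunrise estimate for monotone functions.  Let `m : [0, sbar] → [0, ∞)` be a
non-increasing bounded function and, for `κ > 0`, let
`J_κ = {s₀ ∈ [0, sbar] : |m(s) − m(s₀)| ≤ κ|s − s₀| for all s ∈ [0, sbar]}`.
Then `meas(J_κ) ≥ sbar − 2·m(0)/κ`; in particular `meas(J_κ) → sbar` as `κ → ∞`. -/
theorem sunrise_lipschitz_points (sbar : ℝ) (hsbar : 0 ≤ sbar) (m : ℝ → ℝ)
    (hm_nonneg : ∀ s ∈ Icc (0 : ℝ) sbar, 0 ≤ m s)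
    (hm_mono : ∀ s ∈ Icc (0 : ℝ) sbar, ∀ t ∈ Icc (0 : ℝ) sbar, s ≤ t → m t ≤ m s) :
    (∀ κ : ℝ, 0 < κ →
      ENNReal.ofReal (sbar - 2 * m 0 / κ) ≤
        volume {s₀ ∈ Icc (0 : ℝ) sbar | ∀ s ∈ Icc (0 : ℝ) sbar, |m s - m s₀| ≤ κ * |s - s₀|}) ∧
    Tendsto
      (fun κ : ℝ =>
        volume {s₀ ∈ Icc (0 : ℝ) sbar | ∀ s ∈ Icc (0 : ℝ) sbar, |m s - m s₀| ≤ κ * |s - s₀|})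
      atTop (𝓝 (ENNReal.ofReal sbar)) := by
  have hm0 : 0 ≤ m 0 := hm_nonneg 0 ⟨le_rfl, hsbar⟩
  have main : ∀ κ : ℝ, 0 < κ →
      ENNReal.ofReal (sbar - 2 * m 0 / κ) ≤
        volume {s₀ ∈ Icc (0 : ℝ) sbar | ∀ s ∈ Icc (0 : ℝ) sbar, |m s - m s₀| ≤ κ * |s - s₀|} := by
    intro κ hκ
    set Bm : Set ℝ :=
      {x ∈ Icc (0:ℝ) sbar | ∃ s ∈ Icc (0:ℝ) sbar, s < x ∧ κ * (x - s) < m s - m x} with hBm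
    set n : ℝ → ℝ := fun x => m 0 + m sbar - m (sbar - x) with hn
    have hn_nonneg : ∀ s ∈ Icc (0:ℝ) sbar, 0 ≤ n s := by
      intro s hs
      have hmem : sbar - s ∈ Icc (0:ℝ) sbar := ⟨by linarith [hs.2], by linarith [hs.1]⟩
      have := hm_mono 0 ⟨le_rfl, hsbar⟩ _ hmem hmem.1
      simp only [hn]
      linarith [hm_nonneg sbar ⟨hsbar, le_rfl⟩]
    have hn_mono : ∀ s ∈ Icc (0:ℝ) sbar, ∀ t ∈ Icc (0:ℝ) sbar, s ≤ t → n t ≤ n s := by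
      intro s hs t ht hst
      have hms : sbar - s ∈ Icc (0:ℝ) sbar := ⟨by linarith [hs.2], by linarith [hs.1]⟩
      have hmt : sbar - t ∈ Icc (0:ℝ) sbar := ⟨by linarith [ht.2], by linarith [ht.1]⟩
      have := hm_mono (sbar - t) hmt (sbar - s) hms (by linarith)
      simp only [hn]
      linarith
    have hn0 : n 0 = m 0 := by simp [hn]
    set Bn : Set ℝ :=
      {x ∈ Icc (0:ℝ) sbar | ∃ s ∈ Icc (0:ℝ) sbar, s < x ∧ κ * (x - s) < n s - n x} with hBn
    have hBm_le : volume Bm ≤ ENNReal.ofReal (m 0 / κ) :=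
      sunrise_oneside sbar hsbar m hm_nonneg hm_mono hκ
    have hBn_le : volume Bn ≤ ENNReal.ofReal (m 0 / κ) := by
      have := sunrise_oneside sbar hsbar n hn_nonneg hn_mono hκ
      rwa [hn0] at this
    set r : ℝ → ℝ := fun x => sbar - x with hr
    set Bp : Set ℝ :=
      {x ∈ Icc (0:ℝ) sbar | ∃ s ∈ Icc (0:ℝ) sbar, x < s ∧ κ * (s - x) < m x - m s} with hBp
    have hBp_sub : Bp ⊆ r '' Bn := by
      rintro x ⟨hx, s, hs, hxs, hlt⟩
      refine ⟨sbar - x, ⟨⟨by linarith [hx.2], by linarith [hx.1]⟩,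
        ⟨sbar - s, ⟨by linarith [hs.2], by linarith [hs.1]⟩, by linarith, ?_⟩⟩, by simp [hr]⟩
      have e1 : n (sbar - s) = m 0 + m sbar - m s := by simp [hn, sub_sub_cancel]
      have e2 : n (sbar - x) = m 0 + m sbar - m x := by simp [hn, sub_sub_cancel]
      have e3 : (sbar - x) - (sbar - s) = s - x := by ring
      rw [e1, e2, e3]
      linarith
    have hlip_r : LipschitzWith 1 r := by
      apply LipschitzWith.of_dist_le_mul
      intro x y
      rw [Real.dist_eq, Real.dist_eq, NNReal.coe_one, one_mul]
      have e : r x - r y = -(x - y) := by simp only [hr]; ring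
      rw [e, abs_neg]
    have hBp_le : volume Bp ≤ ENNReal.ofReal (m 0 / κ) := by
      calc volume Bp ≤ volume (r '' Bn) := measure_mono hBp_sub
        _ ≤ ((1 : NNReal) : ℝ≥0∞) * volume Bn := lip_image_vol hlip_r Bn
        _ = volume Bn := by simp
        _ ≤ ENNReal.ofReal (m 0 / κ) := hBn_le
    have hJ : Icc (0:ℝ) sbar \ (Bm ∪ Bp) ⊆
        {s₀ ∈ Icc (0:ℝ) sbar | ∀ s ∈ Icc (0:ℝ) sbar, |m s - m s₀| ≤ κ * |s - s₀|} := by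
      rintro x ⟨hx, hnot⟩
      refine ⟨hx, fun s hs => ?_⟩
      rcases lt_trichotomy s x with hsx | rfl | hxs
      · have hge : m x ≤ m s := hm_mono s hs x hx hsx.le
        have hni : ¬ (κ * (x - s) < m s - m x) := fun hcon =>
          hnot (Or.inl ⟨hx, s, hs, hsx, hcon⟩)
        have hni' := not_lt.1 hni
        rw [abs_of_nonneg (by linarith : (0:ℝ) ≤ m s - m x),
          abs_of_nonpos (by linarith : s - x ≤ 0), neg_sub]
        linarith
      · simp [abs_nonneg]
      · have hge : m s ≤ m x := hm_mono x hx s hs hxs.le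
        have hni : ¬ (κ * (s - x) < m x - m s) := fun hcon =>
          hnot (Or.inr ⟨hx, s, hs, hxs, hcon⟩)
        have hni' := not_lt.1 hni
        rw [abs_of_nonpos (by linarith : m s - m x ≤ 0), neg_sub,
          abs_of_nonneg (by linarith : (0:ℝ) ≤ s - x)]
        linarith
    have hsub : volume (Icc (0:ℝ) sbar) ≤
        volume (Icc (0:ℝ) sbar \ (Bm ∪ Bp)) + (volume Bm + volume Bp) := by
      refine le_trans (measure_mono (subset_diff_union (Icc (0:ℝ) sbar) (Bm ∪ Bp))) ?_
      refine le_trans (measure_union_le _ _) ?_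
      gcongr
      exact measure_union_le _ _
    calc ENNReal.ofReal (sbar - 2 * m 0 / κ)
        = ENNReal.ofReal sbar - ENNReal.ofReal (m 0 / κ + m 0 / κ) := by
          rw [ENNReal.ofReal_sub _ (by positivity)]
          ring_nf
      _ ≤ ENNReal.ofReal sbar - (ENNReal.ofReal (m 0 / κ) + ENNReal.ofReal (m 0 / κ)) := by
          rw [ENNReal.ofReal_add (by positivity) (by positivity)]
      _ ≤ volume (Icc (0:ℝ) sbar) - (volume Bm + volume Bp) := by
          refine tsub_le_tsub ?_ (add_le_add hBm_le hBp_le)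
          rw [Real.volume_Icc, sub_zero]
      _ ≤ volume (Icc (0:ℝ) sbar \ (Bm ∪ Bp)) := tsub_le_iff_right.2 hsub
      _ ≤ volume {s₀ ∈ Icc (0:ℝ) sbar | ∀ s ∈ Icc (0:ℝ) sbar, |m s - m s₀| ≤ κ * |s - s₀|} :=
          measure_mono hJ
  refine ⟨main, ?_⟩
  have hupper : ∀ κ : ℝ,
      volume {s₀ ∈ Icc (0:ℝ) sbar | ∀ s ∈ Icc (0:ℝ) sbar, |m s - m s₀| ≤ κ * |s - s₀|} ≤
        ENNReal.ofReal sbar := fun κ => by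
    refine le_trans (measure_mono (sep_subset _ _)) ?_
    rw [Real.volume_Icc, sub_zero]
  have hlow : Tendsto (fun κ : ℝ => ENNReal.ofReal (sbar - 2 * m 0 / κ)) atTop
      (𝓝 (ENNReal.ofReal sbar)) := by
    have h1 : Tendsto (fun κ : ℝ => sbar - 2 * m 0 / κ) atTop (𝓝 (sbar - 0)) :=
      tendsto_const_nhds.sub (Tendsto.div_atTop tendsto_const_nhds tendsto_id)
    rw [sub_zero] at h1
    exact (ENNReal.continuous_ofReal.tendsto _).comp h1
  refine tendsto_of_tendsto_of_tendsto_of_le_of_le' hlow tendsto_const_nhds ?_ ?_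
  · filter_upwards [eventually_gt_atTop 0] with κ hκ using main κ hκ
  · filter_upwards with κ using hupper κ
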